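/- Let F : ℙ⁴ ⇢ ℙ⁴ be a rational map given by five homogeneous polynomials F₀,…,F₄ of degree 3 with no common factor, and suppose F⁻¹(Y) = X + H as divisors, where Y is a cubic hypersurface, X a quintic, and H a quartic with X and the indeterminacy locus V(F₀,…,F₄) disjoint. If L ⊂ ℙ⁴ is a line meeting V(F₀,…,F₄) in a nonempty scheme that is not a single reduced point, then L ⊂ H. -/

import Mathlib

open MvPolynomial

namespace Stmt15Aux

/-- Graded-lex degree map on exponents in two variables. -/
def D : (Fin 2 →₀ ℕ) → Lex (ℕ × ℕ) := fun d => toLex (d 0 + d 1, d 0)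

lemma D_injective : Function.Injective D := by
  intro d e h
  have h' : ((d 0 + d 1 : ℕ), (d 0 : ℕ)) = (e 0 + e 1, e 0) := toLex.injective h
  have h0 : d 0 = e 0 := congrArg Prod.snd h'
  have h1 : d 1 = e 1 := by
    have := congrArg Prod.fst h'
    simp only at this
    omega
  ext i
  fin_cases i <;> assumption

lemma D_add (d e : Fin 2 →₀ ℕ) : D (d + e) = D d + D e := by
  show toLex _ = toLex _ + toLex _
  rw [← toLex_add]
  apply congrArg toLex
  ext <;> simp [Finsupp.add_apply] <;> ring

lemma sum_eq (d : Fin 2 →₀ ℕ) : (d.sum fun _ e => e) = d 0 + d 1 := by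
  rw [Finsupp.sum_fintype _ _ (fun _ => rfl), Fin.sum_univ_two]

variable {k : Type*} [Field k]

lemma totalDegree_eq_fst {p : MvPolynomial (Fin 2) k} (hp : p ≠ 0) :
    p.totalDegree = (ofLex (AddMonoidAlgebra.supDegree D p)).1 := by
  apply le_antisymm
  · apply Finset.sup_le
    intro d hd
    have h1 : D d ≤ AddMonoidAlgebra.supDegree D p := Finset.le_sup hd
    have h2 := Prod.Lex.monotone_fst _ _ h1
    calc (d.sum fun _ e => e) = d 0 + d 1 := sum_eq d
      _ ≤ _ := h2
  · obtain ⟨d, hd, he⟩ := AddMonoidAlgebra.exists_supDegree_mem_support D hp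
    rw [he]
    calc (ofLex (D d)).1 = d 0 + d 1 := rfl
      _ = (d.sum fun _ e => e) := (sum_eq d).symm
      _ ≤ p.totalDegree := le_totalDegree hd

/-- Total degree is additive on products of nonzero bivariate polynomials over a field. -/
lemma totalDegree_mul_eq {p q : MvPolynomial (Fin 2) k} (hp : p ≠ 0) (hq : q ≠ 0) :
    (p * q).totalDegree = p.totalDegree + q.totalDegree := by
  have hlcp : AddMonoidAlgebra.leadingCoeff D p ≠ 0 :=
    (AddMonoidAlgebra.leadingCoeff_ne_zero D_injective).mpr hp
  have hlcq : AddMonoidAlgebra.leadingCoeff D q ≠ 0 :=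
    (AddMonoidAlgebra.leadingCoeff_ne_zero D_injective).mpr hq
  have hmul : AddMonoidAlgebra.supDegree D (p * q) =
      AddMonoidAlgebra.supDegree D p + AddMonoidAlgebra.supDegree D q :=
    AddMonoidAlgebra.supDegree_mul D_injective D_add (mul_ne_zero hlcp hlcq) hp hq
  rw [totalDegree_eq_fst (mul_ne_zero hp hq), totalDegree_eq_fst hp, totalDegree_eq_fst hq, hmul]
  rfl

lemma eq_C_of_totalDegree_eq_zero {p : MvPolynomial (Fin 2) k} (h : p.totalDegree = 0) :
    p = C (coeff 0 p) := by
  ext m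
  rcases eq_or_ne m 0 with rfl | hm
  · simp
  · rw [coeff_C, if_neg (Ne.symm hm)]
    by_contra hc
    have hmem : m ∈ p.support := mem_support_iff.mpr hc
    have := (totalDegree_eq_zero_iff (Fin 2) p).mp h m hmem
    exact hm (Finsupp.ext fun i => this i)

lemma isUnit_of_totalDegree_eq_zero {p : MvPolynomial (Fin 2) k} (hp : p ≠ 0)
    (h : p.totalDegree = 0) : IsUnit p := by
  have hc : coeff 0 p ≠ 0 := by
    intro hc
    apply hp
    rw [eq_C_of_totalDegree_eq_zero h, hc, map_zero]
  rw [eq_C_of_totalDegree_eq_zero h]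
  exact (isUnit_iff_ne_zero.mpr hc).map C

/-- Substituting a common scalar multiple into a homogeneous polynomial. -/
lemma aeval_mul_of_isHomogeneous {k : Type*} [CommSemiring k] {n : ℕ}
    {G : MvPolynomial (Fin 5) k} (hG : G.IsHomogeneous n)
    {R : Type*} [CommSemiring R] [Algebra k R] (c : R) (x : Fin 5 → R) :
    aeval (fun i => c * x i) G = c ^ n * aeval x G := by
  rw [aeval_def, aeval_def, eval₂_eq', eval₂_eq', Finset.mul_sum]
  apply Finset.sum_congr rfl
  intro d hd
  rw [mem_support_iff] at hd
  have hdeg : ∑ i, d i = n := by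
    have h1 := hG hd
    rw [Finsupp.weight_apply] at h1
    simp only [Pi.one_apply, smul_eq_mul, mul_one] at h1
    rw [← h1, Finsupp.sum_fintype _ _ (fun _ => rfl)]
  have hprod : (∏ i, (c * x i) ^ d i) = c ^ n * ∏ i, x i ^ d i := by
    simp_rw [mul_pow]
    rw [Finset.prod_mul_distrib, Finset.prod_pow_eq_pow_sum, hdeg]
  rw [hprod]
  ring

end Stmt15Aux

open Stmt15Aux in
/-- (Lemma 3.12.)  Let `F : ℙ⁴ ⇢ ℙ⁴` be given by quintuple `F₀,…,F₄` of
homogeneous cubics with no common factor, with `F⁻¹(Y) = X + H`: `G(F₀,…,F₄) = P·K` where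
`G` is the cubic equation of `Y`, `P` the quintic equation of `X`, `K` the quartic
equation of `H`, and `X` disjoint from the indeterminacy locus `V(F₀,…,F₄)`.  If a line
`L` (spanned by independent points `a, b`) meets `V(F₀,…,F₄)` in a nonempty subscheme that
is not a single reduced point — i.e. the restrictions of the `Fᵢ` to `L` have a common
factor of degree `≥ 2` — then `L ⊆ H`. -/
theorem stmt_15 (k : Type*) [Field k] [IsAlgClosed k] [CharZero k]
    (F : Fin 5 → MvPolynomial (Fin 5) k) (hF : ∀ i, (F i).IsHomogeneous 3)
    (hcop : ∀ q : MvPolynomial (Fin 5) k, (∀ i, q ∣ F i) → IsUnit q)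
    (G P K : MvPolynomial (Fin 5) k)
    (hG : G.IsHomogeneous 3) (hP : P.IsHomogeneous 5) (hK : K.IsHomogeneous 4)
    (hfac : aeval F G = P * K)
    (hdisj : ∀ x : Fin 5 → k, x ≠ 0 → (∀ i, eval x (F i) = 0) → eval x P ≠ 0)
    (a b : Fin 5 → k) (hab : LinearIndependent k ![a, b])
    (hq : ∃ q : MvPolynomial (Fin 2) k, 2 ≤ q.totalDegree ∧
      ∀ i, q ∣ aeval (fun j : Fin 5 => C (a j) * X (0 : Fin 2) + C (b j) * X 1) (F i)) :
    ∀ s t : k, eval (fun j => s * a j + t * b j) K = 0 := by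
  classical
  intro s t
  set σf : Fin 5 → MvPolynomial (Fin 2) k :=
    fun j : Fin 5 => C (a j) * X (0 : Fin 2) + C (b j) * X 1 with hσf
  obtain ⟨q, hq2, hqd⟩ := hq
  set f : Fin 5 → MvPolynomial (Fin 2) k := fun i => aeval σf (F i) with hfdef
  -- pointwise evaluation along the line
  have key : ∀ (v : Fin 2 → k) (p : MvPolynomial (Fin 5) k),
      eval v (aeval σf p) = eval (fun j => a j * v 0 + b j * v 1) p := by
    intro v p
    have h1 := comp_aeval_apply (φ := (aeval v : MvPolynomial (Fin 2) k →ₐ[k] k)) (f := σf) p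
    have h2 : (fun j => (aeval v) (σf j)) = fun j => a j * v 0 + b j * v 1 := by
      funext j; simp [hσf]
    calc eval v (aeval σf p) = (aeval v) (aeval σf p) := rfl
      _ = aeval (fun j => (aeval v) (σf j)) p := h1
      _ = aeval (fun j => a j * v 0 + b j * v 1) p := by rw [h2]
      _ = eval (fun j => a j * v 0 + b j * v 1) p := rfl
  have hpair := LinearIndependent.pair_iff.mp hab
  -- basic facts about q
  have hq0 : q ≠ 0 := by
    rintro rfl
    simp at hq2
  -- common factor decomposition
  choose g hg using hqd
  -- push the factorization through the substitution
  have hfac2 : aeval f G = aeval σf P * aeval σf K := by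
    have h1 := comp_aeval_apply
      (φ := (aeval σf : MvPolynomial (Fin 5) k →ₐ[k] MvPolynomial (Fin 2) k)) (f := F) G
    rw [hfac, map_mul] at h1
    exact h1.symm
  have hdvd3 : q ^ 3 ∣ aeval σf P * aeval σf K := by
    rw [← hfac2]
    have hrw : f = fun i => q * g i := funext hg
    rw [hrw]
    exact ⟨aeval g G, aeval_mul_of_isHomogeneous hG q g⟩
  -- q is relatively prime to the restriction of P
  have hrel : IsRelPrime q (aeval σf P) := by
    intro d hdq hdP
    by_contra hdu
    have hd0 : d ≠ 0 := by
      rintro rfl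
      exact hq0 (zero_dvd_iff.mp hdq)
    obtain ⟨r, hr_irr, hrd⟩ := WfDvdMonoid.exists_irreducible_factor hdu hd0
    have hr : Prime r := (UniqueFactorizationMonoid.irreducible_iff_prime).mp hr_irr
    have hrq : r ∣ q := hrd.trans hdq
    have hrP : r ∣ aeval σf P := hrd.trans hdP
    have hrf : ∀ i, r ∣ f i := fun i => hrq.trans ⟨g i, hg i⟩
    set I : Ideal (MvPolynomial (Fin 2) k) :=
      Ideal.span (insert (aeval σf P) (Set.range f)) with hI
    have hIr : ∀ x ∈ I, r ∣ x := by
      intro x hx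
      have hle : I ≤ Ideal.span {r} := by
        rw [hI, Ideal.span_le]
        rintro y (rfl | ⟨i, rfl⟩)
        · exact Ideal.mem_span_singleton.mpr hrP
        · exact Ideal.mem_span_singleton.mpr (hrf i)
      exact Ideal.mem_span_singleton.mp (hle hx)
    have hzero : MvPolynomial.zeroLocus k I ⊆ {(0 : Fin 2 → k)} := by
      intro v hv
      rw [MvPolynomial.mem_zeroLocus_iff] at hv
      simp only [Set.mem_singleton_iff]
      by_contra hv0
      have hx0 : (fun j => a j * v 0 + b j * v 1) ≠ 0 := by
        intro hx
        apply hv0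
        have hz : v 0 • a + v 1 • b = 0 := by
          funext j
          have := congrFun hx j
          simpa [mul_comm] using this
        obtain ⟨h0, h1⟩ := hpair (v 0) (v 1) hz
        funext i
        fin_cases i <;> simp [h0, h1]
      have hFv : ∀ i, eval (fun j => a j * v 0 + b j * v 1) (F i) = 0 := by
        intro i
        rw [← key v (F i)]
        exact hv (f i) (Ideal.subset_span (Set.mem_insert_of_mem _ ⟨i, rfl⟩))
      have hPv : eval (fun j => a j * v 0 + b j * v 1) P = 0 := by
        rw [← key v P]
        exact hv _ (Ideal.subset_span (Set.mem_insert _ _))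
      exact hdisj _ hx0 hFv hPv
    have hX : ∀ i0 : Fin 2, r ∣ X i0 := by
      intro i0
      have hmem : (X i0 : MvPolynomial (Fin 2) k) ∈ I.radical := by
        rw [← MvPolynomial.vanishingIdeal_zeroLocus_eq_radical (K := k)]
        rw [MvPolynomial.mem_vanishingIdeal_iff]
        intro x hx
        have hx0 : x = 0 := hzero hx
        subst hx0
        simp
      obtain ⟨n, hn⟩ := Ideal.mem_radical_iff.mp hmem
      exact hr.dvd_of_dvd_pow (hIr _ hn)
    obtain ⟨u, hu⟩ := hX 0
    obtain ⟨w, hw⟩ := hX 1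
    have hr0 : r ≠ 0 := hr.ne_zero
    have hu0 : u ≠ 0 := by
      rintro rfl
      rw [mul_zero] at hu
      exact X_ne_zero (0 : Fin 2) hu
    have hw0 : w ≠ 0 := by
      rintro rfl
      rw [mul_zero] at hw
      exact X_ne_zero (1 : Fin 2) hw
    have h1 : r.totalDegree + u.totalDegree = 1 := by
      rw [← totalDegree_mul_eq hr0 hu0, ← hu, totalDegree_X]
    have h2 : r.totalDegree + w.totalDegree = 1 := by
      rw [← totalDegree_mul_eq hr0 hw0, ← hw, totalDegree_X]
    have hrdeg : r.totalDegree ≠ 0 := fun h =>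
      hr.not_unit (isUnit_of_totalDegree_eq_zero hr0 h)
    have hu_deg : u.totalDegree = 0 := by omega
    have hw_deg : w.totalDegree = 0 := by omega
    -- evaluate at the point (0, 1)
    have heval : ∀ p : MvPolynomial (Fin 2) k, True := fun _ => trivial
    have hu_C : u = C (coeff 0 u) := eq_C_of_totalDegree_eq_zero hu_deg
    have hw_C : w = C (coeff 0 w) := eq_C_of_totalDegree_eq_zero hw_deg
    have hcu : coeff 0 u ≠ 0 := by
      intro hc
      apply hu0
      rw [hu_C, hc, map_zero]
    have e0 : eval ![(0 : k), 1] (X (0 : Fin 2) : MvPolynomial (Fin 2) k) = 0 := by simp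
    have e1 : eval ![(0 : k), 1] (X (1 : Fin 2) : MvPolynomial (Fin 2) k) = 1 := by simp
    have hev_r : eval ![(0 : k), 1] r = 0 := by
      have := congrArg (eval ![(0 : k), 1]) hu
      rw [e0, map_mul, hu_C, eval_C] at this
      rcases mul_eq_zero.mp this.symm with h | h
      · exact h
      · exact absurd h hcu
    have : (1 : k) = 0 := by
      have h3 := congrArg (eval ![(0 : k), 1]) hw
      rw [e1, map_mul, hev_r, zero_mul] at h3
      exact h3
    exact one_ne_zero this
  -- conclude q³ divides the restriction of K
  have hdvdK : q ^ 3 ∣ aeval σf K := (hrel.pow_left).dvd_of_dvd_mul_left hdvd3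
  -- the restriction of K must vanish identically
  have hKzero : aeval σf K = 0 := by
    by_contra hK0
    obtain ⟨M, hM⟩ := hdvdK
    have hM0 : M ≠ 0 := by
      rintro rfl
      rw [mul_zero] at hM
      exact hK0 hM
    have hhom : (aeval σf K).IsHomogeneous (1 * 4) :=
      hK.aeval σf fun j =>
        ((isHomogeneous_X _ _).C_mul _).add ((isHomogeneous_X _ _).C_mul _)
    have hdegK : (aeval σf K).totalDegree ≤ 4 := by
      simpa using hhom.totalDegree_le
    have e0 : q ^ 3 * M = q * (q * (q * M)) := by ring
    have hqm : q * M ≠ 0 := mul_ne_zero hq0 hM0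
    have hqqm : q * (q * M) ≠ 0 := mul_ne_zero hq0 hqm
    rw [hM, e0, totalDegree_mul_eq hq0 hqqm, totalDegree_mul_eq hq0 hqm,
      totalDegree_mul_eq hq0 hM0] at hdegK
    omega
  -- evaluate at (s, t)
  have h := key ![s, t] K
  rw [hKzero, map_zero] at h
  have hfun : (fun j => s * a j + t * b j) =
      (fun j => a j * (![s, t]) 0 + b j * (![s, t]) 1) := by
    funext j
    simp [mul_comm]
  rw [hfun]
  exact h.symm
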